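/- Let v ≥ 1 and k ≥ 0 be integers and let Λ be a finite subgroup of (ℝ/ℤ)^{d+1} having δ-polynomial 1 + t^{k+1} + t^{2(k+1)} + ⋯ + t^{(v−1)(k+1)}. Let x = (x_0,…,x_d) ∈ Λ be an element with ht(x) = k+1, and let m denote the additive order of x. Then every coordinate x_i equals either 0 or the class of 1/m in ℝ/ℤ; consequently exactly m(k+1) coordinates of x are nonzero, i.e., up to reordering the coordinates, x = (1/m, …, 1/m, 0, …, 0) with m(k+1) entries equal to 1/m. -/

import Mathlib

open scoped BigOperators

local instance : Fact ((0:ℝ) < 1) := ⟨one_pos⟩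

noncomputable def fracR (x : AddCircle (1:ℝ)) : ℝ :=
  ((AddCircle.equivIco 1 0) x : ℝ)

noncomputable def ht {ι : Type*} [Fintype ι] (x : ι → AddCircle (1:ℝ)) : ℝ :=
  ∑ i, fracR (x i)

/-- `Λ` has δ-polynomial `1 + t^step + t^(2*step) + ⋯ + t^((v-1)*step)` :
the height map is a bijection from `Λ` onto `{j*step : 0 ≤ j ≤ v-1}`. -/
def HasDeltaPoly {ι : Type*} [Fintype ι] (v step : ℕ)
    (Λ : Set (ι → AddCircle (1:ℝ))) : Prop :=
  Set.BijOn ht Λ {y : ℝ | ∃ j : ℕ, j < v ∧ y = (j : ℝ) * (step : ℝ)}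

def NonPyramidal {ι : Type*} [Fintype ι] (Λ : Set (ι → AddCircle (1:ℝ))) : Prop :=
  ∀ i : ι, ∃ x ∈ Λ, x i ≠ 0
lemma fracR_coe (r : ℝ) : fracR (r : AddCircle (1:ℝ)) = Int.fract r := by
  simpa [fracR] using AddCircle.coe_equivIco_mk_apply (p := (1:ℝ)) r
lemma coe_fracR (y : AddCircle (1:ℝ)) : ((fracR y : ℝ) : AddCircle (1:ℝ)) = y :=
  (AddCircle.equivIco (1:ℝ) 0).symm_apply_apply y
lemma fracR_nonneg (y : AddCircle (1:ℝ)) : 0 ≤ fracR y := by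
  have := ((AddCircle.equivIco (1:ℝ) 0) y).2.1; exact this
lemma fracR_lt_one (y : AddCircle (1:ℝ)) : fracR y < 1 := by
  have := ((AddCircle.equivIco (1:ℝ) 0) y).2.2; have h : fracR y < 0 + 1 := this; linarith
lemma fracR_add_le (a b : AddCircle (1:ℝ)) : fracR (a+b) ≤ fracR a + fracR b := by
  have h : a + b = ((fracR a + fracR b : ℝ) : AddCircle (1:ℝ)) := by
    conv_lhs => rw [← coe_fracR a, ← coe_fracR b]
    norm_cast
  rw [h, fracR_coe]
  have h0 : (0:ℝ) ≤ fracR a + fracR b := add_nonneg (fracR_nonneg a) (fracR_nonneg b)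
  have := Int.floor_nonneg.mpr h0
  have hf : Int.fract (fracR a + fracR b) = fracR a + fracR b - ⌊fracR a + fracR b⌋ := rfl
  have h2 : (0:ℝ) ≤ (⌊fracR a + fracR b⌋ : ℝ) := by exact_mod_cast this
  rw [hf]; linarith
lemma fracR_zero : fracR (0 : AddCircle (1:ℝ)) = 0 := by
  have : ((0:ℝ) : AddCircle (1:ℝ)) = 0 := by norm_num
  rw [← this, fracR_coe]; simp
lemma fracR_nsmul_le (y : AddCircle (1:ℝ)) (n : ℕ) : fracR (n • y) ≤ n * fracR y := by
  induction n with
  | zero => simp [fracR_zero]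
  | succ n ih =>
    have h : (n+1) • y = n • y + y := by rw [add_nsmul, one_nsmul]
    rw [h]
    calc fracR (n • y + y) ≤ fracR (n • y) + fracR y := fracR_add_le _ _
      _ ≤ n * fracR y + fracR y := by linarith
      _ = (n+1 : ℕ) * fracR y := by push_cast; ring

lemma ht_add_le {ι : Type*} [Fintype ι] (a b : ι → AddCircle (1:ℝ)) :
    ht (a + b) ≤ ht a + ht b := by
  rw [ht, ht, ht, ← Finset.sum_add_distrib]
  exact Finset.sum_le_sum fun i _ => fracR_add_le (a i) (b i)

theorem stmt_9 (v k d : ℕ) (hv : 1 ≤ v)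
    (Λ : AddSubgroup (Fin (d+1) → AddCircle (1:ℝ)))
    (hfin : (Λ : Set (Fin (d+1) → AddCircle (1:ℝ))).Finite)
    (hΛ : HasDeltaPoly v (k+1) (Λ : Set (Fin (d+1) → AddCircle (1:ℝ))))
    (x : Fin (d+1) → AddCircle (1:ℝ)) (hx : x ∈ Λ)
    (hht : ht x = ((k : ℝ) + 1)) :
    (∀ i : Fin (d+1), x i = 0 ∨
      x i = ((1 / (addOrderOf x : ℝ) : ℝ) : AddCircle (1:ℝ))) ∧
    (Finset.univ.filter (fun i : Fin (d+1) => x i ≠ 0)).card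
      = addOrderOf x * (k+1) := by
  haveI : Finite Λ := hfin.to_subtype
  set m := addOrderOf x with hm
  have hmpos : 0 < m := by
    rw [hm, ← AddSubgroup.addOrderOf_mk x hx]
    exact (isOfFinAddOrder_of_finite _).addOrderOf_pos
  -- heights of multiples
  have hmem : ∀ j : ℕ, j • x ∈ Λ := fun j => AddSubgroup.nsmul_mem Λ hx j
  have ht0 : ht (0 : Fin (d+1) → AddCircle (1:ℝ)) = 0 := by
    simp [ht, fracR_zero]
  have key : ∀ j : ℕ, j < m → ht (j • x) = (j : ℝ) * ((k:ℝ)+1) := by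
    intro j
    induction j using Nat.strong_induction_on with
    | _ j ih =>
      intro hj
      obtain ⟨c, hcv, hcht⟩ := hΛ.mapsTo (hmem j)
      have hcht' : ht (j • x) = (c : ℝ) * ((k:ℝ)+1) := by
        rw [hcht]; push_cast; ring
      match j, hj, ih with
      | 0, hj, ih => simpa using ht0
      | (j+1), hj, ih =>
        have ihj : ht (j • x) = (j : ℝ) * ((k:ℝ)+1) := ih j (Nat.lt_succ_self j) (Nat.lt_of_succ_lt hj)
        have hub : ht ((j+1) • x) ≤ ((j:ℝ)+1) * ((k:ℝ)+1) := by
          have h1 : (j+1) • x = j • x + x := by rw [add_nsmul, one_nsmul]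
          calc ht ((j+1) • x) = ht (j • x + x) := by rw [h1]
            _ ≤ ht (j • x) + ht x := ht_add_le _ _
            _ = ((j:ℝ)+1) * ((k:ℝ)+1) := by rw [ihj, hht]; ring
        have hcle : c ≤ j + 1 := by
          by_contra hc
          push_neg at hc
          have : ((j:ℝ)+1) * ((k:ℝ)+1) < (c:ℝ) * ((k:ℝ)+1) := by
            have : ((j:ℝ)+1) < (c:ℝ) := by exact_mod_cast hc
            have hk1 : (0:ℝ) < (k:ℝ)+1 := by positivity
            nlinarith
          rw [hcht'] at hub; linarith
        rcases eq_or_lt_of_le hcle with heq | hlt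
        · rw [hcht', heq]
        · -- c < j+1 : contradiction with injectivity
          exfalso
          have hcj : c < j + 1 := hlt
          have ihc : ht (c • x) = (c : ℝ) * ((k:ℝ)+1) := by
            rcases Nat.eq_zero_or_pos c with rfl | hcpos
            · simpa using ht0
            · exact ih c hcj (lt_trans hcj hj)
          have heq2 : ht ((j+1) • x) = ht (c • x) := by rw [hcht', ihc]
          have hinj := hΛ.injOn (hmem (j+1)) (hmem c) heq2
          have hsub : (j + 1 - c) • x = 0 := by
            rw [sub_nsmul x (le_of_lt hcj), hinj]; abel
          have hdvd : m ∣ (j + 1 - c) := addOrderOf_dvd_of_nsmul_eq_zero hsub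
          have hpos : 0 < j + 1 - c := Nat.sub_pos_of_lt hcj
          have : m ≤ j + 1 - c := Nat.le_of_dvd hpos hdvd
          omega
  -- m ≥ 2
  have hm2 : 2 ≤ m := by
    rcases Nat.lt_or_ge m 2 with h | h
    · exfalso
      have hm1 : m = 1 := by omega
      have hx0 : x = 0 := AddMonoid.addOrderOf_eq_one_iff.mp (by rw [← hm, hm1])
      rw [hx0, ht0] at hht
      have : (0:ℝ) < (k:ℝ) + 1 := by positivity
      linarith
    · exact h
  -- termwise equality at j = m-1
  set n := m - 1 with hn
  have hnm : n < m := by omega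
  have hkey : ht (n • x) = (n : ℝ) * ((k:ℝ)+1) := key n hnm
  have hterm : ∀ i : Fin (d+1), fracR (n • x i) = (n:ℝ) * fracR (x i) := by
    have hle : ∀ i ∈ Finset.univ, fracR ((n • x) i) ≤ (n:ℝ) * fracR (x i) := by
      intro i _
      have : (n • x) i = n • (x i) := rfl
      rw [this]
      exact fracR_nsmul_le (x i) n
    have hsums : ∑ i, fracR ((n • x) i) = ∑ i, (n:ℝ) * fracR (x i) := by
      rw [← ht]
      rw [hkey, ← Finset.mul_sum, ← ht, hht]
    have := (Finset.sum_eq_sum_iff_of_le hle).mp hsums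
    intro i
    exact this i (Finset.mem_univ i)
  -- coordinate analysis
  have hcoord : ∀ i : Fin (d+1), x i = 0 ∨ x i = ((1 / (m : ℝ) : ℝ) : AddCircle (1:ℝ)) := by
    intro i
    set α := fracR (x i) with hα
    have hα0 : 0 ≤ α := fracR_nonneg _
    have hnα : (n:ℝ) * α < 1 := by
      rw [← hterm i]; exact fracR_lt_one _
    have hmx : m • (x i) = 0 := by
      have := addOrderOf_nsmul_eq_zero x
      rw [← hm] at this
      exact congrFun this i
    have hcoe : ((m * α : ℝ) : AddCircle (1:ℝ)) = 0 := by
      have h1 : x i = ((α : ℝ) : AddCircle (1:ℝ)) := (coe_fracR _).symm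
      rw [h1] at hmx
      rw [← hmx, ← AddCircle.coe_nsmul, nsmul_eq_mul]
    obtain ⟨z, hz⟩ := (AddCircle.coe_eq_zero_iff (1:ℝ)).mp hcoe
    have hz' : (m:ℝ) * α = (z:ℝ) := by rw [← hz]; simp
    clear hz
    have hz : (z:ℝ) = (m:ℝ) * α := hz'.symm
    have hz0 : 0 ≤ z := by
      have : (0:ℝ) ≤ (z:ℝ) := by rw [hz]; positivity
      exact_mod_cast this
    have hz2 : z < 2 := by
      have hna : (m:ℝ) * α = (n:ℝ) * α + α := by
        have : (m:ℝ) = (n:ℝ) + 1 := by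
          rw [hn]; push_cast [Nat.cast_sub (by omega : 1 ≤ m)]; ring
        rw [this]; ring
      have : (z:ℝ) < 2 := by
        rw [hz, hna]
        have := fracR_lt_one (x i)
        rw [← hα] at this
        linarith
      exact_mod_cast this
    interval_cases z
    · left
      have hm0 : (m:ℝ) ≠ 0 := by positivity
      have h0 : (m:ℝ) * α = 0 := by rw [hz']; norm_num
      have hα0' : α = 0 := by
        rcases mul_eq_zero.mp h0 with h | h
        · exact absurd h hm0
        · exact h
      rw [← coe_fracR (x i), ← hα, hα0']
      norm_num
    · right
      have hm0 : (m:ℝ) ≠ 0 := by positivity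
      have h1 : (m:ℝ) * α = 1 := by rw [hz']; norm_num
      have hα1 : α = 1 / (m:ℝ) := by
        rw [eq_div_iff hm0]; linear_combination h1
      rw [← coe_fracR (x i), ← hα, hα1]
  refine ⟨hcoord, ?_⟩
  -- counting
  have hfrac_val : ∀ i : Fin (d+1), fracR (x i) = if x i = 0 then 0 else 1 / (m:ℝ) := by
    intro i
    by_cases h0 : x i = 0
    · simp [h0, fracR_zero]
    · rcases hcoord i with h | h
      · exact absurd h h0
      · rw [if_neg h0, h, fracR_coe, Int.fract_eq_self.mpr]
        constructor
        · positivity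
        · rw [div_lt_one (by positivity)]
          exact_mod_cast by omega
  have hsum : ((k:ℝ)+1) = ((Finset.univ.filter (fun i : Fin (d+1) => x i ≠ 0)).card : ℝ) * (1/(m:ℝ)) := by
    rw [← hht, ht]
    rw [Finset.sum_congr rfl (fun i _ => hfrac_val i)]
    rw [Finset.sum_ite, Finset.sum_const, Finset.sum_const]
    simp [Finset.filter_not]
  have hm0 : (m:ℝ) ≠ 0 := by positivity
  have : ((Finset.univ.filter (fun i : Fin (d+1) => x i ≠ 0)).card : ℝ) = (m:ℝ) * ((k:ℝ)+1) := by
    field_simp at hsum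
    linarith
  have hgoal : ((Finset.univ.filter (fun i : Fin (d+1) => x i ≠ 0)).card : ℝ) = ((m * (k+1) : ℕ) : ℝ) := by
    rw [this]; push_cast; ring
  exact_mod_cast hgoal
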